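/- Let U be a submodular universe, k ∈ ℕ, and 𝒫 a set of regular profiles of S_k. Then every profile P ∈ 𝒫 includes a star σ ⊆ P belonging to F_e; that is, a star σ ⊆ P with property Eff(P) that is included in no profile in 𝒫 other than P. -/
import Mathlib


namespace SepDemo

/-- A universe of separations: a finite lattice with an order-reversing involution. -/
structure SepUniverse (U : Type*) [Lattice U] [Fintype U] where
  inv : U → U
  inv_inv : ∀ s, inv (inv s) = s
  le_iff : ∀ r s : U, r ≤ s ↔ inv s ≤ inv r

/-- A submodular universe: a universe with a submodular order function. -/
structure SubmodUniverse (U : Type*) [Lattice U] [Fintype U] extends SepUniverse U where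
  ord : U → ℕ
  ord_inv : ∀ s, ord (inv s) = ord s
  submod : ∀ s t : U, ord (s ⊔ t) + ord (s ⊓ t) ≤ ord s + ord t

variable {U : Type*} [Lattice U] [Fintype U]

/-- A separation system inside a universe: a subset closed under the involution. -/
def SepSystem (𝒰 : SepUniverse U) (S : Set U) : Prop :=
  ∀ s ∈ S, 𝒰.inv s ∈ S

/-- An orientation of `S`: contains, for each `s ∈ S`, exactly one of `s`, `s*`
(just `s` itself if `s` is degenerate). -/
def IsOrientation (𝒰 : SepUniverse U) (S O : Set U) : Prop :=
  O ⊆ S ∧ ∀ s ∈ S, (s ∈ O ∨ 𝒰.inv s ∈ O) ∧ (s ∈ O → 𝒰.inv s ∈ O → s = 𝒰.inv s)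

/-- Consistency: no `r, s ∈ O` with `{r,r*} ≠ {s,s*}` and `r* ≤ s`. -/
def Consistent (𝒰 : SepUniverse U) (O : Set U) : Prop :=
  ∀ r ∈ O, ∀ s ∈ O, ({r, 𝒰.inv r} : Set U) ≠ ({s, 𝒰.inv s} : Set U) → ¬ 𝒰.inv r ≤ s

/-- A profile of `S`: a consistent orientation satisfying the profile property. -/
def IsProfile (𝒰 : SepUniverse U) (S P : Set U) : Prop :=
  IsOrientation 𝒰 S P ∧ Consistent 𝒰 P ∧ ∀ r ∈ P, ∀ s ∈ P, 𝒰.inv (r ⊔ s) ∉ P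

/-- Regular: contains no cosmall separation. -/
def Regular (𝒰 : SepUniverse U) (P : Set U) : Prop :=
  ∀ s ∈ P, ¬ 𝒰.inv s ≤ s

/-- Two separations are nested. -/
def Nested (𝒰 : SepUniverse U) (r s : U) : Prop :=
  r ≤ s ∨ r ≤ 𝒰.inv s ∨ 𝒰.inv r ≤ s ∨ 𝒰.inv r ≤ 𝒰.inv s

/-- A set of separations is nested if its members are pairwise nested. -/
def NestedSet (𝒰 : SepUniverse U) (N : Set U) : Prop :=
  ∀ r ∈ N, ∀ s ∈ N, Nested 𝒰 r s

/-- `s` distinguishes the orientations `O₁` and `O₂`. -/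
def Distinguishes (𝒰 : SepUniverse U) (s : U) (O₁ O₂ : Set U) : Prop :=
  (s ∈ O₁ ∧ 𝒰.inv s ∈ O₂) ∨ (𝒰.inv s ∈ O₁ ∧ s ∈ O₂)

/-- Two orientations are distinguishable. -/
def Distinguishable (𝒰 : SepUniverse U) (P Q : Set U) : Prop :=
  ∃ s : U, Distinguishes 𝒰 s P Q

/-- Structural submodularity of a separation system. -/
def StructSubmodular (S : Set U) : Prop :=
  ∀ s ∈ S, ∀ t ∈ S, s ⊔ t ∈ S ∨ s ⊓ t ∈ S

/-- `s` is trivial in `S`. -/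
def IsTrivialIn (𝒰 : SepUniverse U) (S : Set U) (s : U) : Prop :=
  ∃ r ∈ S, ({r, 𝒰.inv r} : Set U) ≠ ({s, 𝒰.inv s} : Set U) ∧ s ≤ r ∧ s ≤ 𝒰.inv r

/-- A star of separations. -/
def IsStar (𝒰 : SepUniverse U) (σ : Set U) : Prop :=
  ∀ r ∈ σ, ∀ s ∈ σ, r ≠ s → r ≤ 𝒰.inv s

/-- The shift `σ_x^{s₀}` of a star `σ` at `x ∈ σ` to `s₀`. -/
def shiftStar (𝒰 : SepUniverse U) (σ : Set U) (x s₀ : U) : Set U :=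
  insert (x ⊔ s₀) ((fun y => y ⊓ 𝒰.inv s₀) '' (σ \ {x}))

/-- `s₀` emulates `r` in `S`. -/
def Emulates (𝒰 : SepUniverse U) (S : Set U) (s₀ r : U) : Prop :=
  r ≤ s₀ ∧ ∀ t ∈ S, t ≠ 𝒰.inv r → r ≤ t → t ⊔ s₀ ∈ S

/-- `s₀` emulates `r` in `S` for a set `F` of stars. -/
def EmulatesFor (𝒰 : SepUniverse U) (S : Set U) (F : Set (Set U)) (s₀ r : U) : Prop :=
  Emulates 𝒰 S s₀ r ∧
    ∀ σ ∈ F, 𝒰.inv r ∉ σ → ∀ x ∈ σ, r ≤ x → shiftStar 𝒰 σ x s₀ ∈ F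

/-- `F` forces `s`. -/
def Forces (𝒰 : SepUniverse U) (F : Set (Set U)) (s : U) : Prop :=
  ({𝒰.inv s} : Set U) ∈ F

/-- `S` is `F`-separable. -/
def FSeparable (𝒰 : SepUniverse U) (S : Set U) (F : Set (Set U)) : Prop :=
  ∀ r₁ ∈ S, ∀ r₂ ∈ S,
    ¬ IsTrivialIn 𝒰 S r₁ → ¬ IsTrivialIn 𝒰 S r₂ →
    r₁ ≠ 𝒰.inv r₁ → r₂ ≠ 𝒰.inv r₂ →
    ¬ Forces 𝒰 F r₁ → ¬ Forces 𝒰 F r₂ →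
    r₁ ≤ 𝒰.inv r₂ →
    ∃ s₀ ∈ S, r₁ ≤ s₀ ∧ s₀ ≤ 𝒰.inv r₂ ∧
      EmulatesFor 𝒰 S F s₀ r₁ ∧ EmulatesFor 𝒰 S F (𝒰.inv s₀) r₂

/-- `r` is `F`-critical. -/
def FCritical (𝒰 : SepUniverse U) (F : Set (Set U)) (r : U) : Prop :=
  (∃ σ ∈ F, r ∈ σ) ∧
    ¬ ∃ σ' ∈ F, σ' ∩ ({r, 𝒰.inv r} : Set U) = ({𝒰.inv r} : Set U)

/-- `S` is critically `F`-separable. -/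
def CritFSeparable (𝒰 : SepUniverse U) (S : Set U) (F : Set (Set U)) : Prop :=
  ∀ r₁ ∈ S, ∀ r₂ ∈ S, FCritical 𝒰 F r₁ → FCritical 𝒰 F r₂ → r₁ ≤ 𝒰.inv r₂ →
    ∃ s₀ ∈ S, EmulatesFor 𝒰 S F s₀ r₁ ∧ EmulatesFor 𝒰 S F (𝒰.inv s₀) r₂

/-- An `F`-tangle of `S`: a consistent orientation including no member of `F`. -/
def FTangle (𝒰 : SepUniverse U) (S : Set U) (F : Set (Set U)) (O : Set U) : Prop :=
  IsOrientation 𝒰 S O ∧ Consistent 𝒰 O ∧ ∀ σ ∈ F, ¬ σ ⊆ O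

/-- `F` is standard for `S`: it forces all trivial separations of `S`. -/
def StandardFor (𝒰 : SepUniverse U) (S : Set U) (F : Set (Set U)) : Prop :=
  ∀ r ∈ S, IsTrivialIn 𝒰 S r → ({𝒰.inv r} : Set U) ∈ F

/-- An `S`-tree: a finite tree together with edge labels in `S` commuting with
the involution. -/
structure STree (𝒰 : SepUniverse U) (S : Set U) where
  V : Type
  fintypeV : Fintype V
  G : SimpleGraph V
  isTree : G.IsTree
  label : V → V → U
  label_mem : ∀ x y, G.Adj x y → label x y ∈ S
  label_inv : ∀ x y, G.Adj x y → label y x = 𝒰.inv (label x y)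

namespace STree

variable {𝒰 : SepUniverse U} {S : Set U}

/-- The star `α(t)` associated with a node `t`. -/
def nodeStar (T : STree 𝒰 S) (t : T.V) : Set U :=
  {u | ∃ s, T.G.Adj s t ∧ T.label s t = u}

/-- The `S`-tree is over `F`. -/
def Over (T : STree 𝒰 S) (F : Set (Set U)) : Prop :=
  ∀ t : T.V, T.nodeStar t ∈ F

/-- Irredundance of an `S`-tree. -/
def Irredundant (T : STree 𝒰 S) : Prop :=
  ∀ t t' t'' : T.V, T.G.Adj t' t → T.G.Adj t'' t → t' ≠ t'' →
    T.label t' t ≠ T.label t'' t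

/-- The set of edge labels of the tree. -/
def labels (T : STree 𝒰 S) : Set U :=
  {u | ∃ x y, T.G.Adj x y ∧ T.label x y = u}

/-- `t` is a sink of the orientation of the tree induced by `P`. -/
def IsSinkOf (T : STree 𝒰 S) (P : Set U) (t : T.V) : Prop :=
  ∀ s, T.G.Adj s t → T.label s t ∈ P

/-- The degree of a node. -/
noncomputable def deg (T : STree 𝒰 S) (t : T.V) : ℕ :=
  (T.G.neighborSet t).ncard

/-- The maximum degree of the tree. -/
noncomputable def maxDeg (T : STree 𝒰 S) : ℕ :=
  sSup {n | ∃ t : T.V, T.deg t = n}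

end STree

/-- A tree of tangles for `S`: an irredundant `S`-tree whose edge labels
distinguish every two distinct regular profiles of `S`. -/
def TreeOfTangles (𝒰 : SepUniverse U) (S : Set U) (T : STree 𝒰 S) : Prop :=
  T.Irredundant ∧
    ∀ P Q : Set U, IsProfile 𝒰 S P → Regular 𝒰 P → IsProfile 𝒰 S Q → Regular 𝒰 Q →
      P ≠ Q → ∃ s ∈ T.labels, Distinguishes 𝒰 s P Q

/-- `δ(P)`: the minimum size of a subset of `P` distinguishing `P` from every
other regular profile of `S`. -/
noncomputable def deltaP (𝒰 : SepUniverse U) (S P : Set U) : ℕ :=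
  sInf {n | ∃ D : Set U, D ⊆ P ∧ D.ncard = n ∧
    ∀ Q : Set U, IsProfile 𝒰 S Q → Regular 𝒰 Q → Q ≠ P →
      ∃ s ∈ D, Distinguishes 𝒰 s P Q}

/-- `S_k`: the separations of order less than `k`. -/
def Sk (𝒱 : SubmodUniverse U) (k : ℕ) : Set U := {s | 𝒱.ord s < k}

/-- `s` distinguishes `P` and `Q` efficiently. -/
def EffDistinguishes (𝒱 : SubmodUniverse U) (s : U) (P Q : Set U) : Prop :=
  Distinguishes 𝒱.toSepUniverse s P Q ∧
    ∀ t : U, Distinguishes 𝒱.toSepUniverse t P Q → 𝒱.ord s ≤ 𝒱.ord t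

/-- Property `Eff(P)` of a star `σ`. -/
def EffProp (𝒱 : SubmodUniverse U) (σ P : Set U) : Prop :=
  ¬ ∃ s ∈ σ, ∃ s' ∈ P, s ≤ s' ∧ 𝒱.ord s' < 𝒱.ord s

/-- `s` is a splice for `r`. -/
def SpliceFor (𝒱 : SubmodUniverse U) (s r : U) : Prop :=
  r ≤ s ∧ ¬ ∃ t : U, r ≤ t ∧ t ≤ s ∧ 𝒱.ord t < 𝒱.ord s

/-- `s` is a splice between `r₁` and `r₂`. -/
def SpliceBetween (𝒱 : SubmodUniverse U) (s r₁ r₂ : U) : Prop :=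
  r₁ ≤ s ∧ s ≤ r₂ ∧ ∀ t : U, r₁ ≤ t → t ≤ r₂ → 𝒱.ord s ≤ 𝒱.ord t

/-- The set `F_e` of stars in `S_k` included in at most one profile of `𝔓` and
satisfying `Eff(P)` whenever included in `P ∈ 𝔓`. -/
def Fe (𝒱 : SubmodUniverse U) (k : ℕ) (𝔓 : Set (Set U)) : Set (Set U) :=
  {σ | σ ⊆ Sk 𝒱 k ∧ IsStar 𝒱.toSepUniverse σ ∧
    (∀ P ∈ 𝔓, ∀ Q ∈ 𝔓, σ ⊆ P → σ ⊆ Q → P = Q) ∧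
    (∀ P ∈ 𝔓, σ ⊆ P → EffProp 𝒱 σ P)}

/-- `δ_e(P)`: the minimum size of a star `σ ⊆ P` with `Eff(P)` such that every
other regular profile of `S_k` contains the inverse of some element of `σ`. -/
noncomputable def deltaE (𝒱 : SubmodUniverse U) (k : ℕ) (P : Set U) : ℕ :=
  sInf {n | ∃ σ : Set U, σ ⊆ P ∧ IsStar 𝒱.toSepUniverse σ ∧ EffProp 𝒱 σ P ∧
    σ.ncard = n ∧
    ∀ Q : Set U, IsProfile 𝒱.toSepUniverse (Sk 𝒱 k) Q → Regular 𝒱.toSepUniverse Q →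
      Q ≠ P → ∃ s ∈ σ, 𝒱.inv s ∈ Q}

/-- `δ_{e,max}`: maximum of `δ_e` over all regular profiles of `S_k`. -/
noncomputable def deltaEMax (𝒱 : SubmodUniverse U) (k : ℕ) : ℕ :=
  sSup {n | ∃ P : Set U, IsProfile 𝒱.toSepUniverse (Sk 𝒱 k) P ∧
    Regular 𝒱.toSepUniverse P ∧ deltaE 𝒱 k P = n}

/-- `P` is a profile in `U`: a `k`-profile for some `k`. -/
def ProfileIn (𝒱 : SubmodUniverse U) (P : Set U) : Prop :=
  ∃ k : ℕ, IsProfile 𝒱.toSepUniverse (Sk 𝒱 k) P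

/-- Strong robustness of a profile. -/
def StronglyRobust (𝒱 : SubmodUniverse U) (P : Set U) : Prop :=
  ∀ s ∈ P, ∀ r : U, 𝒱.ord (s ⊔ r) ≤ 𝒱.ord s → 𝒱.ord (s ⊔ 𝒱.inv r) ≤ 𝒱.ord s →
    (s ⊔ r ∈ P ∨ s ⊔ 𝒱.inv r ∈ P)

/-- `O` weakly orients a separation as `s'` if `s' ≤ r` for some `r ∈ O`. -/
def WeaklyOrientsAs (O : Set U) (s' : U) : Prop :=
  ∃ r ∈ O, s' ≤ r

/-- `O` weakly orients `s` (as `s` or as `s*`). -/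
def WeaklyOrients (𝒰 : SepUniverse U) (O : Set U) (s : U) : Prop :=
  WeaklyOrientsAs O s ∨ WeaklyOrientsAs O (𝒰.inv s)

/-- The set `F_d` of stars, relative to the set of profiles `𝔓`. -/
def Fd (𝒱 : SubmodUniverse U) (𝔓 : Set (Set U)) : Set (Set U) :=
  {σ | IsStar 𝒱.toSepUniverse σ ∧
    (∀ P ∈ 𝔓, ∀ Q ∈ 𝔓, σ ⊆ P → σ ⊆ Q → P = Q) ∧
    (∀ P ∈ 𝔓, ¬ σ ⊆ P → ∃ s ∈ σ, WeaklyOrientsAs P (𝒱.inv s)) ∧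
    (∀ P ∈ 𝔓, σ ⊆ P → EffProp 𝒱 σ P)}
section Statement8Aux

open scoped Classical

variable {U : Type*} [Lattice U] [Fintype U]

private lemma SepUniverse.inv_sup' (𝒰 : SepUniverse U) (a b : U) :
    𝒰.inv (a ⊔ b) = 𝒰.inv a ⊓ 𝒰.inv b := by
  have h1 : 𝒰.inv (a ⊔ b) ≤ 𝒰.inv a := (𝒰.le_iff a (a ⊔ b)).1 le_sup_left
  have h2 : 𝒰.inv (a ⊔ b) ≤ 𝒰.inv b := (𝒰.le_iff b (a ⊔ b)).1 le_sup_right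
  have h3 : 𝒰.inv a ⊓ 𝒰.inv b ≤ 𝒰.inv (a ⊔ b) := by
    rw [𝒰.le_iff, 𝒰.inv_inv]
    apply sup_le
    · rw [𝒰.le_iff, 𝒰.inv_inv]; exact inf_le_left
    · rw [𝒰.le_iff, 𝒰.inv_inv]; exact inf_le_right
  exact le_antisymm (le_inf h1 h2) h3

private lemma not_le_inv_symm' (𝒰 : SepUniverse U) {a b : U} (h : ¬ a ≤ 𝒰.inv b) :
    ¬ b ≤ 𝒰.inv a := by
  intro hb
  apply h
  have := (𝒰.le_iff b (𝒰.inv a)).1 hb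
  rwa [𝒰.inv_inv] at this

private lemma le_inv_of_le_inv' (𝒰 : SepUniverse U) {a b : U} (h : a ≤ 𝒰.inv b) :
    b ≤ 𝒰.inv a := by
  have := (𝒰.le_iff a (𝒰.inv b)).1 h
  rwa [𝒰.inv_inv] at this

/-- Elements of `P` above an element of `P \ Q` are not in `Q`. -/
private lemma notMem_up' (𝒱 : SubmodUniverse U) {k : ℕ} {P Q : Set U}
    (hPprof : IsProfile 𝒱.toSepUniverse (Sk 𝒱 k) P)
    (hQprof : IsProfile 𝒱.toSepUniverse (Sk 𝒱 k) Q)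
    {s s' : U} (hsP : s ∈ P) (hs'P : s' ∈ P) (hle : s ≤ s') (hsQ : s ∉ Q) : s' ∉ Q := by
  intro hs'Q
  have hsSk : s ∈ Sk 𝒱 k := hPprof.1.1 hsP
  have hinv : 𝒱.inv s ∈ Q := ((hQprof.1.2 s hsSk).1).resolve_left hsQ
  by_cases h1 : s' = s
  · exact hsQ (h1 ▸ hs'Q)
  by_cases h2 : s' = 𝒱.inv s
  · have hdeg : s = 𝒱.inv s := (hPprof.1.2 s hsSk).2 hsP (h2 ▸ hs'P)
    exact hsQ (by rw [hdeg, ← h2]; exact hs'Q)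
  have hne : ({𝒱.inv s, 𝒱.inv (𝒱.inv s)} : Set U) ≠ {s', 𝒱.inv s'} := by
    intro hEq
    have hmem : s' ∈ ({s', 𝒱.inv s'} : Set U) := by simp
    rw [← hEq] at hmem
    simp only [Set.mem_insert_iff, Set.mem_singleton_iff, 𝒱.inv_inv] at hmem
    rcases hmem with h | h
    · exact h2 h
    · exact h1 h
  have hcons := hQprof.2.1 (𝒱.inv s) hinv s' hs'Q hne
  rw [𝒱.inv_inv] at hcons
  exact hcons hle

/-- The corner `s ⊓ r*` lies in `P` whenever `r, s ∈ P` cross and it has small order. -/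
private lemma corner_mem' (𝒱 : SubmodUniverse U) {k : ℕ} {P : Set U}
    (hprof : IsProfile 𝒱.toSepUniverse (Sk 𝒱 k) P) (hreg : Regular 𝒱.toSepUniverse P)
    {r s : U} (hsP : s ∈ P) (hcross : ¬ s ≤ 𝒱.inv r)
    (hord : s ⊓ 𝒱.inv r ∈ Sk 𝒱 k) : s ⊓ 𝒱.inv r ∈ P := by
  set u := s ⊓ 𝒱.inv r with hu
  rcases (hprof.1.2 u hord).1 with h | h
  · exact h
  exfalso
  by_cases h1 : s = u
  · exact hcross (by rw [h1]; exact inf_le_right)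
  by_cases h2 : s = 𝒱.inv u
  · apply hreg s hsP
    have hinvs : 𝒱.inv s = u := by rw [h2, 𝒱.inv_inv]
    rw [hinvs]
    exact inf_le_left
  have hne : ({𝒱.inv u, 𝒱.inv (𝒱.inv u)} : Set U) ≠ {s, 𝒱.inv s} := by
    intro hEq
    have hmem : s ∈ ({s, 𝒱.inv s} : Set U) := by simp
    rw [← hEq] at hmem
    simp only [Set.mem_insert_iff, Set.mem_singleton_iff, 𝒱.inv_inv] at hmem
    rcases hmem with h' | h'
    · exact h2 h'
    · exact h1 h'
  have hcons := hprof.2.1 (𝒱.inv u) h s hsP hne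
  rw [𝒱.inv_inv] at hcons
  exact hcons inf_le_left

/-- The corner `s ⊓ r*` is not in a profile `Q` containing `r` and `s*`. -/
private lemma corner_notMem' (𝒱 : SubmodUniverse U) {k : ℕ} {Q : Set U}
    (hQprof : IsProfile 𝒱.toSepUniverse (Sk 𝒱 k) Q)
    {r s : U} (hrQ : r ∈ Q) (hsinvQ : 𝒱.inv s ∈ Q) : s ⊓ 𝒱.inv r ∉ Q := by
  have h := hQprof.2.2 (𝒱.inv s) hsinvQ r hrQ
  have heq : 𝒱.inv (𝒱.inv s ⊔ r) = s ⊓ 𝒱.inv r := by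
    rw [SepUniverse.inv_sup', 𝒱.inv_inv]
  rwa [heq] at h

/-- Number of crossing ordered pairs in a finite set of separations. -/
private noncomputable def crossN (𝒰 : SepUniverse U) (σ : Finset U) : ℕ :=
  ((σ ×ˢ σ).filter (fun p => p.1 ≠ p.2 ∧ ¬ p.1 ≤ 𝒰.inv p.2)).card

private lemma crossN_le (𝒰 : SepUniverse U) (σ : Finset U) :
    crossN 𝒰 σ ≤ Fintype.card U * Fintype.card U := by
  unfold crossN
  calc ((σ ×ˢ σ).filter _).card ≤ (σ ×ˢ σ).card := Finset.card_filter_le _ _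
    _ = σ.card * σ.card := Finset.card_product σ σ
    _ ≤ Fintype.card U * Fintype.card U :=
        Nat.mul_le_mul (Finset.card_le_univ σ) (Finset.card_le_univ σ)

/-- The key crossing-number decrease when replacing `s` by `u' = s ⊓ r*`. -/
private lemma crossN_lt' (𝒰 : SepUniverse U) {σ : Finset U} {r s u' : U}
    (hr : r ∈ σ) (hs : s ∈ σ) (hrs : r ≠ s) (hcross : ¬ s ≤ 𝒰.inv r)
    (hu's : u' ≤ s) (hru' : r ≤ 𝒰.inv u')
    (hu'new : u' ∉ σ.erase s) :
    crossN 𝒰 (insert u' (σ.erase s)) < crossN 𝒰 σ := by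
  have hinvmono : 𝒰.inv s ≤ 𝒰.inv u' := (𝒰.le_iff u' s).1 hu's
  have hsu' : s ≠ u' := by
    intro h
    exact hcross (by rw [h]; exact le_inv_of_le_inv' 𝒰 hru')
  have hru'ne : r ≠ u' := by
    intro h
    exact hu'new (h ▸ Finset.mem_erase.mpr ⟨hrs, hr⟩)
  set σ' : Finset U := insert u' (σ.erase s) with hσ'
  have hsσ' : s ∉ σ' := by
    simp only [hσ', Finset.mem_insert, Finset.mem_erase]
    push_neg
    exact ⟨hsu', fun h _ => h rfl⟩
  have hmemσ : ∀ x ∈ σ', (if x = u' then s else x) ∈ σ := by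
    intro x hx
    by_cases h : x = u'
    · simpa [h] using hs
    · simp only [h, if_false]
      rcases Finset.mem_insert.mp hx with h' | h'
      · exact absurd h' h
      · exact Finset.mem_of_mem_erase h'
  have hinjc : ∀ x ∈ σ', ∀ y ∈ σ', (if x = u' then s else x) = (if y = u' then s else y) → x = y := by
    intro x hx y hy hxy
    by_cases h1 : x = u' <;> by_cases h2 : y = u'
    · rw [h1, h2]
    · simp only [h1, h2, if_true, if_false] at hxy; exact absurd (hxy ▸ hy) hsσ'
    · simp only [h1, h2, if_true, if_false] at hxy; exact absurd (hxy ▸ hx) hsσ'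
    · simpa [h1, h2] using hxy
  set m : U × U → U × U := fun p => (if p.1 = u' then s else p.1, if p.2 = u' then s else p.2)
    with hm
  set T : Finset U → Finset (U × U) :=
    fun τ => (τ ×ˢ τ).filter (fun p => p.1 ≠ p.2 ∧ ¬ p.1 ≤ 𝒰.inv p.2) with hT
  have hmemT : ∀ τ p, p ∈ T τ ↔ (p.1 ∈ τ ∧ p.2 ∈ τ) ∧ (p.1 ≠ p.2 ∧ ¬ p.1 ≤ 𝒰.inv p.2) := by
    intro τ p
    simp [hT, Finset.mem_filter, Finset.mem_product]
  have hmaps : ∀ p ∈ T σ', m p ∈ T σ := by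
    intro p hp
    rw [hmemT] at hp ⊢
    obtain ⟨⟨hp1, hp2⟩, hpne, hpcross⟩ := hp
    refine ⟨⟨hmemσ _ hp1, hmemσ _ hp2⟩, fun h => hpne (hinjc _ hp1 _ hp2 h), ?_⟩
    intro hle
    apply hpcross
    by_cases h1 : p.1 = u' <;> by_cases h2 : p.2 = u'
    · exact absurd (h1.trans h2.symm) hpne
    · simp only [hm, h1, h2, if_true, if_false] at hle
      rw [h1]
      exact hu's.trans hle
    · simp only [hm, h1, h2, if_true, if_false] at hle
      rw [h2]
      exact hle.trans hinvmono
    · simpa [hm, h1, h2] using hle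
  have hinj : Set.InjOn m (T σ' : Set (U × U)) := by
    intro p hp q hq hpq
    rw [Finset.mem_coe, hmemT] at hp hq
    have h1 := congrArg Prod.fst hpq
    have h2 := congrArg Prod.snd hpq
    simp only [hm] at h1 h2
    exact Prod.ext (hinjc _ hp.1.1 _ hq.1.1 h1) (hinjc _ hp.1.2 _ hq.1.2 h2)
  have hcard : (T σ').card = ((T σ').image m).card := (Finset.card_image_of_injOn hinj).symm
  have hsubset : (T σ').image m ⊆ T σ := by
    intro q hq
    obtain ⟨p, hp, rfl⟩ := Finset.mem_image.mp hq
    exact hmaps p hp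
  have hrsT : (r, s) ∈ T σ := by
    rw [hmemT]
    exact ⟨⟨hr, hs⟩, hrs, not_le_inv_symm' 𝒰 hcross⟩
  have hrsnot : (r, s) ∉ (T σ').image m := by
    intro h
    obtain ⟨p, hp, hpq⟩ := Finset.mem_image.mp h
    rw [hmemT] at hp
    have h1 := congrArg Prod.fst hpq
    have h2 := congrArg Prod.snd hpq
    simp only [hm] at h1 h2
    have hp2 : p.2 = u' := by
      by_contra hc
      simp only [hc, if_false] at h2
      exact hsσ' (h2 ▸ hp.1.2)
    have hp1 : p.1 = r := by
      by_cases hc : p.1 = u'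
      · simp only [hc, if_true] at h1
        exact absurd h1 (fun h' => hrs (h'.symm))
      · simpa [hc] using h1
    exact hp.2.2 (by rw [hp1, hp2]; exact hru')
  have hss : (T σ').image m ⊂ T σ :=
    (Finset.ssubset_iff_of_subset hsubset).mpr ⟨(r, s), hrsT, hrsnot⟩
  calc crossN 𝒰 σ' = ((T σ').image m).card := hcard
    _ < (T σ).card := Finset.card_lt_card hss
    _ = crossN 𝒰 σ := rfl

/-- The lexicographic measure combined into a single natural number. -/
private noncomputable def mes (𝒱 : SubmodUniverse U) (σ : Finset U) : ℕ :=
  (∑ s ∈ σ, 𝒱.ord s) *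
      ((Fintype.card U * Fintype.card U + Fintype.card U + 1) *
        (Fintype.card U * Fintype.card U + Fintype.card U + 1)) +
    (σ.card * (Fintype.card U * Fintype.card U + Fintype.card U + 1) +
      crossN 𝒱.toSepUniverse σ)

private lemma mes_lt' (𝒱 : SubmodUniverse U) {σ σ' : Finset U}
    (hS : ∑ x ∈ σ', 𝒱.ord x ≤ ∑ x ∈ σ, 𝒱.ord x)
    (h : (∑ x ∈ σ', 𝒱.ord x < ∑ x ∈ σ, 𝒱.ord x) ∨ σ'.card < σ.card ∨
      (σ'.card ≤ σ.card ∧ crossN 𝒱.toSepUniverse σ' < crossN 𝒱.toSepUniverse σ)) :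
    mes 𝒱 σ' < mes 𝒱 σ := by
  have ha : σ.card ≤ Fintype.card U := Finset.card_le_univ σ
  have ha' : σ'.card ≤ Fintype.card U := Finset.card_le_univ σ'
  have hn : crossN 𝒱.toSepUniverse σ ≤ Fintype.card U * Fintype.card U := crossN_le _ σ
  have hn' : crossN 𝒱.toSepUniverse σ' ≤ Fintype.card U * Fintype.card U := crossN_le _ σ'
  set c := Fintype.card U
  set K := c * c + c + 1 with hK
  set S := ∑ x ∈ σ, 𝒱.ord x
  set S' := ∑ x ∈ σ', 𝒱.ord x
  set a := σ.card
  set a' := σ'.card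
  set n := crossN 𝒱.toSepUniverse σ
  set n' := crossN 𝒱.toSepUniverse σ'
  have hcK : c < K := by omega
  have hccK : c * c < K := by omega
  show S' * (K * K) + (a' * K + n') < S * (K * K) + (a * K + n)
  rcases h with h | h | ⟨h1, h2⟩
  · have hb : a' * K + n' < K * K := by nlinarith
    calc S' * (K * K) + (a' * K + n') < S' * (K * K) + K * K := by omega
      _ = (S' + 1) * (K * K) := by ring
      _ ≤ S * (K * K) := Nat.mul_le_mul_right _ h
      _ ≤ S * (K * K) + (a * K + n) := Nat.le_add_right _ _
  · have h4 : a' * K + n' < a * K := by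
      calc a' * K + n' < a' * K + K := by omega
        _ = (a' + 1) * K := by ring
        _ ≤ a * K := Nat.mul_le_mul_right _ h
    have h5 : S' * (K * K) ≤ S * (K * K) := Nat.mul_le_mul_right _ hS
    omega
  · have h4 : a' * K ≤ a * K := Nat.mul_le_mul_right _ h1
    have h5 : S' * (K * K) ≤ S * (K * K) := Nat.mul_le_mul_right _ hS
    omega

/-- The single uncrossing move: replace `s` by `s ⊓ r*`. -/
private lemma moveC' (𝒱 : SubmodUniverse U) (k : ℕ) (𝔓 : Set (Set U))
    (h𝔓 : ∀ P ∈ 𝔓, IsProfile 𝒱.toSepUniverse (Sk 𝒱 k) P ∧ Regular 𝒱.toSepUniverse P)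
    (P : Set U) (hP : P ∈ 𝔓) {σ : Finset U} {r s : U}
    (hσP : (↑σ : Set U) ⊆ P)
    (hcov : ∀ Q ∈ 𝔓, Q ≠ P → ∃ t ∈ σ, t ∉ Q)
    (hr : r ∈ σ) (hs : s ∈ σ) (hrs : r ≠ s) (hcross : ¬ s ≤ 𝒱.inv r)
    (hord : 𝒱.ord (s ⊓ 𝒱.inv r) ≤ 𝒱.ord s) :
    ∃ σ' : Finset U, (↑σ' : Set U) ⊆ P ∧ (∀ Q ∈ 𝔓, Q ≠ P → ∃ t ∈ σ', t ∉ Q) ∧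
      mes 𝒱 σ' < mes 𝒱 σ := by
  obtain ⟨hPprof, hPreg⟩ := h𝔓 P hP
  have hsP : s ∈ P := hσP hs
  have hrP : r ∈ P := hσP hr
  set u' := s ⊓ 𝒱.inv r with hu'
  have hu's : u' ≤ s := inf_le_left
  have hu'invr : u' ≤ 𝒱.inv r := inf_le_right
  have hru' : r ≤ 𝒱.inv u' := le_inv_of_le_inv' _ hu'invr
  have hsSk : s ∈ Sk 𝒱 k := hPprof.1.1 hsP
  have hu'Sk : u' ∈ Sk 𝒱 k := by
    simp only [Sk, Set.mem_setOf_eq] at hsSk ⊢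
    omega
  have hu'P : u' ∈ P := corner_mem' 𝒱 hPprof hPreg hsP hcross hu'Sk
  refine ⟨insert u' (σ.erase s), ?_, ?_, ?_⟩
  · intro x hx
    rcases Finset.mem_insert.mp hx with h | h
    · exact h ▸ hu'P
    · exact hσP (Finset.mem_of_mem_erase h)
  · intro Q hQ hQP
    obtain ⟨hQprof, hQreg⟩ := h𝔓 Q hQ
    obtain ⟨t, htσ, htQ⟩ := hcov Q hQ hQP
    by_cases hts : t = s
    · subst hts
      by_cases hrQ : r ∈ Q
      · refine ⟨u', Finset.mem_insert_self _ _, ?_⟩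
        have hinvt : 𝒱.inv t ∈ Q := ((hQprof.1.2 t hsSk).1).resolve_left htQ
        exact corner_notMem' 𝒱 hQprof hrQ hinvt
      · exact ⟨r, Finset.mem_insert_of_mem (Finset.mem_erase.mpr ⟨hrs, hr⟩), hrQ⟩
    · exact ⟨t, Finset.mem_insert_of_mem (Finset.mem_erase.mpr ⟨hts, htσ⟩), htQ⟩
  · have hsumer : ∑ x ∈ σ.erase s, 𝒱.ord x + 𝒱.ord s = ∑ x ∈ σ, 𝒱.ord x :=
      Finset.sum_erase_add σ _ hs
    by_cases hmem : u' ∈ σ.erase s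
    · rw [Finset.insert_eq_self.mpr hmem]
      apply mes_lt'
      · omega
      · right; left
        have := Finset.card_erase_add_one hs
        omega
    · have hsum : ∑ x ∈ insert u' (σ.erase s), 𝒱.ord x =
          𝒱.ord u' + ∑ x ∈ σ.erase s, 𝒱.ord x := Finset.sum_insert hmem
      have hcard : (insert u' (σ.erase s)).card = σ.card := by
        rw [Finset.card_insert_of_notMem hmem]
        exact Finset.card_erase_add_one hs
      apply mes_lt'
      · omega
      · right; right
        exact ⟨le_of_eq hcard, crossN_lt' _ hr hs hrs hcross hu's hru' hmem⟩

/-- Main induction: any covering subset of `P` can be improved to a star with `Eff(P)`. -/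
private lemma main_aux' (𝒱 : SubmodUniverse U) (k : ℕ) (𝔓 : Set (Set U))
    (h𝔓 : ∀ P ∈ 𝔓, IsProfile 𝒱.toSepUniverse (Sk 𝒱 k) P ∧ Regular 𝒱.toSepUniverse P)
    (P : Set U) (hP : P ∈ 𝔓) :
    ∀ (n : ℕ) (σ : Finset U), mes 𝒱 σ = n → (↑σ : Set U) ⊆ P →
      (∀ Q ∈ 𝔓, Q ≠ P → ∃ t ∈ σ, t ∉ Q) →
      ∃ τ : Set U, τ ⊆ P ∧ IsStar 𝒱.toSepUniverse τ ∧ EffProp 𝒱 τ P ∧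
        ∀ Q ∈ 𝔓, Q ≠ P → ¬ τ ⊆ Q := by
  intro n
  induction n using Nat.strong_induction_on with
  | _ n IH =>
    intro σ hn hσP hcov
    obtain ⟨hPprof, hPreg⟩ := h𝔓 P hP
    by_cases hEff : ∃ t ∈ σ, ∃ t' ∈ P, t ≤ t' ∧ 𝒱.ord t' < 𝒱.ord t
    · -- Move A: replace `t` by the larger, lower-order `t'`.
      obtain ⟨t, htσ, t', ht'P, hle, hlt⟩ := hEff
      set σ' : Finset U := insert t' (σ.erase t) with hσ'
      have hσ'P : (↑σ' : Set U) ⊆ P := by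
        intro x hx
        rcases Finset.mem_insert.mp hx with h | h
        · exact h ▸ ht'P
        · exact hσP (Finset.mem_of_mem_erase h)
      have hcov' : ∀ Q ∈ 𝔓, Q ≠ P → ∃ x ∈ σ', x ∉ Q := by
        intro Q hQ hQP
        obtain ⟨hQprof, hQreg⟩ := h𝔓 Q hQ
        obtain ⟨x, hxσ, hxQ⟩ := hcov Q hQ hQP
        by_cases hxt : x = t
        · refine ⟨t', Finset.mem_insert_self _ _, ?_⟩
          exact notMem_up' 𝒱 hPprof hQprof (hσP hxσ) ht'P (hxt ▸ hle) hxQ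
        · exact ⟨x, Finset.mem_insert_of_mem (Finset.mem_erase.mpr ⟨hxt, hxσ⟩), hxQ⟩
      have hsumer : ∑ x ∈ σ.erase t, 𝒱.ord x + 𝒱.ord t = ∑ x ∈ σ, 𝒱.ord x :=
        Finset.sum_erase_add σ _ htσ
      have hsum' : ∑ x ∈ σ', 𝒱.ord x ≤ 𝒱.ord t' + ∑ x ∈ σ.erase t, 𝒱.ord x := by
        by_cases h : t' ∈ σ.erase t
        · rw [hσ', Finset.insert_eq_self.mpr h]
          exact Nat.le_add_left _ _
        · rw [hσ', Finset.sum_insert h]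
      have hmes : mes 𝒱 σ' < mes 𝒱 σ := by
        apply mes_lt' <;> omega
      exact IH (mes 𝒱 σ') (hn ▸ hmes) σ' rfl hσ'P hcov'
    · by_cases hStar : ∃ a ∈ σ, ∃ b ∈ σ, a ≠ b ∧ ¬ a ≤ 𝒱.inv b
      · -- Move C: uncross a crossing pair.
        obtain ⟨a, haσ, b, hbσ, hab, hnle⟩ := hStar
        have hnle' : ¬ b ≤ 𝒱.inv a := not_le_inv_symm' _ hnle
        have h1 := 𝒱.submod a (𝒱.inv b)
        have h2 : 𝒱.ord (a ⊔ 𝒱.inv b) = 𝒱.ord (b ⊓ 𝒱.inv a) := by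
          have he : 𝒱.inv (a ⊔ 𝒱.inv b) = b ⊓ 𝒱.inv a := by
            rw [SepUniverse.inv_sup', 𝒱.inv_inv, inf_comm]
          rw [← he, 𝒱.ord_inv]
        have h3 : 𝒱.ord (𝒱.inv b) = 𝒱.ord b := 𝒱.ord_inv b
        have hdisj : 𝒱.ord (b ⊓ 𝒱.inv a) ≤ 𝒱.ord b ∨ 𝒱.ord (a ⊓ 𝒱.inv b) ≤ 𝒱.ord a := by
          omega
        rcases hdisj with h | h
        · obtain ⟨σ', h1', h2', h3'⟩ :=
            moveC' 𝒱 k 𝔓 h𝔓 P hP hσP hcov haσ hbσ hab hnle' h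
          exact IH (mes 𝒱 σ') (hn ▸ h3') σ' rfl h1' h2'
        · obtain ⟨σ', h1', h2', h3'⟩ :=
            moveC' 𝒱 k 𝔓 h𝔓 P hP hσP hcov hbσ haσ (Ne.symm hab) hnle h
          exact IH (mes 𝒱 σ') (hn ▸ h3') σ' rfl h1' h2'
      · -- Terminal: `σ` is the desired star.
        push_neg at hStar
        refine ⟨(↑σ : Set U), hσP, ?_, ?_, ?_⟩
        · intro x hx y hy hxy
          exact hStar x (Finset.mem_coe.mp hx) y (Finset.mem_coe.mp hy) hxy
        · intro ⟨t, htσ, t', ht'P, hle, hlt⟩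
          exact hEff ⟨t, Finset.mem_coe.mp htσ, t', ht'P, hle, hlt⟩
        · intro Q hQ hQP hsub
          obtain ⟨t, htσ, htQ⟩ := hcov Q hQ hQP
          exact htQ (hsub (Finset.mem_coe.mpr htσ))

end Statement8Aux

/-- Every profile `P` in a set `𝔓` of regular profiles of `S_k`
includes a star `σ ⊆ P` with property `Eff(P)` included in no other profile
in `𝔓` (i.e. a star belonging to `F_e`). -/
theorem profile_star_efficient (𝒱 : SubmodUniverse U) (k : ℕ) (𝔓 : Set (Set U))
    (h𝔓 : ∀ P ∈ 𝔓, IsProfile 𝒱.toSepUniverse (Sk 𝒱 k) P ∧ Regular 𝒱.toSepUniverse P)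
    (P : Set U) (hP : P ∈ 𝔓) :
    ∃ σ : Set U, σ ⊆ P ∧ IsStar 𝒱.toSepUniverse σ ∧ EffProp 𝒱 σ P ∧
      ∀ Q ∈ 𝔓, Q ≠ P → ¬ σ ⊆ Q := by
  open scoped Classical in
  obtain ⟨hPprof, hPreg⟩ := h𝔓 P hP
  have hFP : (↑(Set.toFinite P).toFinset : Set U) ⊆ P := by
    rw [Set.Finite.coe_toFinset]
  have hcov : ∀ Q ∈ 𝔓, Q ≠ P → ∃ t ∈ (Set.toFinite P).toFinset, t ∉ Q := by
    intro Q hQ hQP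
    obtain ⟨hQprof, hQreg⟩ := h𝔓 Q hQ
    by_contra hno
    push_neg at hno
    have hPQ : P ⊆ Q := fun x hx => hno x ((Set.Finite.mem_toFinset _).mpr hx)
    have hnQP : ¬ Q ⊆ P := fun hQP' => hQP (Set.Subset.antisymm hQP' hPQ)
    obtain ⟨t, htQ, htP⟩ := Set.not_subset.mp hnQP
    have htSk : t ∈ Sk 𝒱 k := hQprof.1.1 htQ
    rcases (hPprof.1.2 t htSk).1 with h | h
    · exact htP h
    · have hdeg : t = 𝒱.inv t := (hQprof.1.2 t htSk).2 htQ (hPQ h)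
      exact htP (by rw [hdeg]; exact h)
  exact main_aux' 𝒱 k 𝔓 h𝔓 P hP (mes 𝒱 (Set.toFinite P).toFinset)
    (Set.toFinite P).toFinset rfl hFP hcov

end SepDemo
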